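/- Suppose n is even, k = n/2, and the randomized algorithm 𝒜 is ε-DP on size-k subsets of 𝒟. Then for every x* ∈ 𝒟 and every identification algorithm ℐ, the success probability P(ℐ(x*, 𝒜(D_train)) = y*) is at most 1/(1 + e^{−ε}); equivalently, 𝒜 is η-MIP with η = 1/(1 + e^{−ε}) − 1/2. -/
import Mathlib

lemma row_card {α : Type*} [DecidableEq α] (𝒟 : Finset α) (k : ℕ) (hk1 : 1 ≤ k)
    (hcard : 𝒟.card = k + k) (x : α) (D₁ : Finset α)
    (hD₁ : D₁ ∈ 𝒟.powersetCard k) (hxD : x ∈ D₁) :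
    ((𝒟.powersetCard k).filter (fun D₀ => x ∉ D₀ ∧ (D₁ ∩ D₀).card = k - 1)).card = k := by
  obtain ⟨hsub, hc⟩ := Finset.mem_powersetCard.mp hD₁
  have hxerase : x ∉ D₁.erase x := Finset.notMem_erase x D₁
  have himg : ((𝒟.powersetCard k).filter (fun D₀ => x ∉ D₀ ∧ (D₁ ∩ D₀).card = k - 1))
      = (𝒟 \ D₁).image (fun y => insert y (D₁.erase x)) := by
    ext D₀
    simp only [Finset.mem_filter, Finset.mem_image, Finset.mem_powersetCard, Finset.mem_sdiff]
    constructor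
    · rintro ⟨⟨hsub₀, hc₀⟩, hx₀, hint⟩
      have h1 : D₁ ∩ D₀ ⊆ D₁.erase x := by
        intro a ha
        rw [Finset.mem_erase]
        refine ⟨?_, (Finset.mem_inter.mp ha).1⟩
        rintro rfl; exact hx₀ (Finset.mem_inter.mp ha).2
      have h2 : D₁ ∩ D₀ = D₁.erase x :=
        Finset.eq_of_subset_of_card_le h1
          (by rw [Finset.card_erase_of_mem hxD, hc, hint])
      have h3 : D₁.erase x ⊆ D₀ := by rw [← h2]; exact Finset.inter_subset_right
      have h4 : (D₀ \ (D₁.erase x)).card = 1 := by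
        rw [Finset.card_sdiff_of_subset h3, hc₀, Finset.card_erase_of_mem hxD, hc]; omega
      obtain ⟨y, hy⟩ := Finset.card_eq_one.mp h4
      have hyD₀ : y ∈ D₀ ∧ y ∉ D₁.erase x :=
        Finset.mem_sdiff.mp (hy ▸ Finset.mem_singleton_self y)
      have hyD₁ : y ∉ D₁ := by
        intro hyD₁
        exact hyD₀.2 (Finset.mem_erase.mpr ⟨by rintro rfl; exact hx₀ hyD₀.1, hyD₁⟩)
      refine ⟨y, ⟨hsub₀ hyD₀.1, hyD₁⟩, ?_⟩
      refine Finset.eq_of_subset_of_card_le (Finset.insert_subset hyD₀.1 h3) ?_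
      rw [Finset.card_insert_of_notMem hyD₀.2, Finset.card_erase_of_mem hxD, hc, hc₀]
      omega
    · rintro ⟨y, ⟨hy𝒟, hyD₁⟩, rfl⟩
      have hynot : y ∉ D₁.erase x := fun h => hyD₁ (Finset.mem_of_mem_erase h)
      have hxney : x ≠ y := by rintro rfl; exact hyD₁ hxD
      have hcins : (insert y (D₁.erase x)).card = k := by
        rw [Finset.card_insert_of_notMem hynot, Finset.card_erase_of_mem hxD, hc]; omega
      refine ⟨⟨Finset.insert_subset hy𝒟 ((Finset.erase_subset x D₁).trans hsub), hcins⟩,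
        ?_, ?_⟩
      · simp only [Finset.mem_insert, Finset.mem_erase]
        push_neg
        exact ⟨hxney, fun h => absurd rfl h⟩
      · have : D₁ ∩ insert y (D₁.erase x) = D₁.erase x := by
          ext a
          simp only [Finset.mem_inter, Finset.mem_insert, Finset.mem_erase]
          constructor
          · rintro ⟨ha, rfl | ⟨hax, _⟩⟩
            · exact absurd ha hyD₁
            · exact ⟨hax, ha⟩
          · rintro ⟨hax, ha⟩; exact ⟨ha, Or.inr ⟨hax, ha⟩⟩
        rw [this, Finset.card_erase_of_mem hxD, hc]
  rw [himg, Finset.card_image_of_injOn, Finset.card_sdiff_of_subset hsub, hcard, hc]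
  · omega
  · intro y hy y' hy' h
    have hy1 : y ∉ D₁.erase x := fun h' => (Finset.mem_sdiff.mp hy).2 (Finset.mem_of_mem_erase h')
    have h' : insert y (D₁.erase x) = insert y' (D₁.erase x) := h
    have : y ∈ insert y' (D₁.erase x) := h' ▸ Finset.mem_insert_self y _
    rcases Finset.mem_insert.mp this with h' | h'
    · exact h'
    · exact absurd h' hy1

lemma col_card {α : Type*} [DecidableEq α] (𝒟 : Finset α) (k : ℕ) (hk1 : 1 ≤ k)
    (hcard : 𝒟.card = k + k) (x : α) (hx : x ∈ 𝒟) (D₀ : Finset α)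
    (hD₀ : D₀ ∈ 𝒟.powersetCard k) (hxD : x ∉ D₀) :
    ((𝒟.powersetCard k).filter (fun D₁ => x ∈ D₁ ∧ (D₁ ∩ D₀).card = k - 1)).card = k := by
  obtain ⟨hsub, hc⟩ := Finset.mem_powersetCard.mp hD₀
  have himg : ((𝒟.powersetCard k).filter (fun D₁ => x ∈ D₁ ∧ (D₁ ∩ D₀).card = k - 1))
      = D₀.image (fun y => insert x (D₀.erase y)) := by
    ext D₁
    simp only [Finset.mem_filter, Finset.mem_image, Finset.mem_powersetCard]
    constructor
    · rintro ⟨⟨hsub₁, hc₁⟩, hx₁, hint⟩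
      have h1 : D₁ ∩ D₀ ⊆ D₁.erase x := by
        intro a ha
        rw [Finset.mem_erase]
        refine ⟨?_, (Finset.mem_inter.mp ha).1⟩
        rintro rfl; exact hxD (Finset.mem_inter.mp ha).2
      have h2 : D₁ ∩ D₀ = D₁.erase x :=
        Finset.eq_of_subset_of_card_le h1
          (by rw [Finset.card_erase_of_mem hx₁, hc₁, hint])
      have h4 : (D₀ \ (D₁ ∩ D₀)).card = 1 := by
        rw [Finset.card_sdiff_of_subset Finset.inter_subset_right, hc, hint]; omega
      obtain ⟨y, hy⟩ := Finset.card_eq_one.mp h4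
      have hyD₀ : y ∈ D₀ ∧ y ∉ D₁ ∩ D₀ :=
        Finset.mem_sdiff.mp (hy ▸ Finset.mem_singleton_self y)
      have h5 : D₁ ∩ D₀ = D₀.erase y := by
        apply Finset.eq_of_subset_of_card_le
        · intro a ha
          exact Finset.mem_erase.mpr ⟨by rintro rfl; exact hyD₀.2 ha,
            (Finset.mem_inter.mp ha).2⟩
        · rw [Finset.card_erase_of_mem hyD₀.1, hc, hint]
      refine ⟨y, hyD₀.1, ?_⟩
      rw [← h5, h2, Finset.insert_erase hx₁]
    · rintro ⟨y, hyD₀, rfl⟩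
      have hxnot : x ∉ D₀.erase y := fun h => hxD (Finset.mem_of_mem_erase h)
      have hcins : (insert x (D₀.erase y)).card = k := by
        rw [Finset.card_insert_of_notMem hxnot, Finset.card_erase_of_mem hyD₀, hc]; omega
      refine ⟨⟨Finset.insert_subset hx ((Finset.erase_subset y D₀).trans hsub), hcins⟩,
        Finset.mem_insert_self x _, ?_⟩
      have : insert x (D₀.erase y) ∩ D₀ = D₀.erase y := by
        ext a
        simp only [Finset.mem_inter, Finset.mem_insert, Finset.mem_erase]
        constructor
        · rintro ⟨rfl | ⟨hay, ha⟩, ha'⟩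
          · exact absurd ha' hxD
          · exact ⟨hay, ha'⟩
        · rintro ⟨hay, ha⟩; exact ⟨Or.inr ⟨hay, ha⟩, ha⟩
      rw [this, Finset.card_erase_of_mem hyD₀, hc]
  rw [himg, Finset.card_image_of_injOn, hc]
  intro y hy y' hy' h
  have hxnot : x ∉ D₀.erase y := fun h' => hxD (Finset.mem_of_mem_erase h')
  have hxnot' : x ∉ D₀.erase y' := fun h' => hxD (Finset.mem_of_mem_erase h')
  have herase : D₀.erase y = D₀.erase y' := by
    have := congrArg (fun s => Finset.erase s x) h
    simpa [Finset.erase_insert hxnot, Finset.erase_insert hxnot'] using this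
  by_contra hne
  exact (Finset.notMem_erase y D₀) (herase ▸ Finset.mem_erase.mpr ⟨hne, hy⟩)

/-- if `n` is even, `k = n/2`, and `𝒜` is `ε`-DP on size-`k`
subsets of `𝒟` (for adjacent subsets, i.e. size-`k` subsets sharing `k - 1`
elements, all output probabilities differ by a factor of at most `e^ε`), then
for every target `x* ∈ 𝒟` and every adversary `ℐ`, the success probability is
at most `1/(1 + e^{-ε})`; equivalently `𝒜` is `η`-MIP with
`η = 1/(1 + e^{-ε}) - 1/2`. -/
theorem statement_3 {α 𝔸 : Type*} [DecidableEq α] [Fintype 𝔸]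
    (n k : ℕ) (hn : 2 ≤ n) (hev : Even n) (hk : k = n / 2)
    (𝒟 : Finset α) (hcard : 𝒟.card = n)
    (ε : ℝ)
    (𝒜 : Finset α → 𝔸 → ℝ)
    (h𝒜0 : ∀ D A, 0 ≤ 𝒜 D A)
    (h𝒜1 : ∀ D ∈ 𝒟.powersetCard k, ∑ A, 𝒜 D A = 1)
    (hDP : ∀ D ∈ 𝒟.powersetCard k, ∀ D' ∈ 𝒟.powersetCard k,
      (D ∩ D').card = k - 1 → ∀ A, 𝒜 D A ≤ Real.exp ε * 𝒜 D' A)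
    (x : α) (hx : x ∈ 𝒟)
    (ℐ : 𝔸 → ℝ) (hℐ : ∀ A, ℐ A ∈ Set.Icc (0 : ℝ) 1) :
    ((𝒟.powersetCard k).card : ℝ)⁻¹ *
        ∑ D ∈ 𝒟.powersetCard k, ∑ A, 𝒜 D A * (if x ∈ D then ℐ A else 1 - ℐ A) ≤
      1 / (1 + Real.exp (-ε)) := by
  classical
  obtain ⟨m, hm⟩ := hev
  have hk1 : 1 ≤ k := by omega
  have hcard2 : 𝒟.card = k + k := by omega
  set P := 𝒟.powersetCard k with hP
  set c : ℝ := (1 + Real.exp (-ε))⁻¹ with hc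
  have hepos : (0:ℝ) < 1 + Real.exp (-ε) := by positivity
  have hcpos : (0:ℝ) < c := by positivity
  have hcE : c * (1 + Real.exp (-ε)) = 1 := inv_mul_cancel₀ (ne_of_gt hepos)
  have hEE : Real.exp (-ε) * Real.exp ε = 1 := by
    rw [← Real.exp_add]; simp
  -- pointwise pair bound
  set f₁ : Finset α → ℝ := fun D => ∑ A, 𝒜 D A * ℐ A with hf₁
  set f₀ : Finset α → ℝ := fun D => ∑ A, 𝒜 D A * (1 - ℐ A) with hf₀
  have pair_bound : ∀ D₁ ∈ P, ∀ D₀ ∈ P, (D₁ ∩ D₀).card = k - 1 →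
      f₁ D₁ + f₀ D₀ ≤ 2 * c := by
    intro D₁ hD₁ D₀ hD₀ hint
    have hsum : f₁ D₁ + f₀ D₀ = ∑ A, (𝒜 D₁ A * ℐ A + 𝒜 D₀ A * (1 - ℐ A)) := by
      rw [hf₁, hf₀, ← Finset.sum_add_distrib]
    rw [hsum]
    have hle : ∀ A, 𝒜 D₁ A * ℐ A + 𝒜 D₀ A * (1 - ℐ A) ≤ (𝒜 D₁ A + 𝒜 D₀ A) * c := by
      intro A
      have hpq := hDP D₁ hD₁ D₀ hD₀ hint A
      have hqp := hDP D₀ hD₀ D₁ hD₁ (by rwa [Finset.inter_comm]) A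
      have hp := h𝒜0 D₁ A
      have hq := h𝒜0 D₀ A
      obtain ⟨ht0, ht1⟩ := hℐ A
      set p := 𝒜 D₁ A
      set q := 𝒜 D₀ A
      set t := ℐ A
      rcases le_total p q with hle | hle
      · have key : Real.exp (-ε) * q ≤ p := by
          have := mul_le_mul_of_nonneg_left hqp (Real.exp_pos (-ε)).le
          nlinarith [this, hEE]
        have h1 : p * t + q * (1 - t) ≤ q := by nlinarith
        have h2 : q * (1 + Real.exp (-ε)) ≤ p + q := by nlinarith
        calc p * t + q * (1 - t) ≤ q := h1
          _ = q * (1 + Real.exp (-ε)) * c := by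
              rw [mul_assoc, mul_comm (1 + Real.exp (-ε)), hcE]; ring
          _ ≤ (p + q) * c := by nlinarith
      · have key : Real.exp (-ε) * p ≤ q := by
          have := mul_le_mul_of_nonneg_left hpq (Real.exp_pos (-ε)).le
          nlinarith [this, hEE]
        have h1 : p * t + q * (1 - t) ≤ p := by nlinarith
        have h2 : p * (1 + Real.exp (-ε)) ≤ p + q := by nlinarith
        calc p * t + q * (1 - t) ≤ p := h1
          _ = p * (1 + Real.exp (-ε)) * c := by
              rw [mul_assoc, mul_comm (1 + Real.exp (-ε)), hcE]; ring
          _ ≤ (p + q) * c := by nlinarith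
    calc ∑ A, (𝒜 D₁ A * ℐ A + 𝒜 D₀ A * (1 - ℐ A))
        ≤ ∑ A, (𝒜 D₁ A + 𝒜 D₀ A) * c := Finset.sum_le_sum fun A _ => hle A
      _ = (∑ A, 𝒜 D₁ A + ∑ A, 𝒜 D₀ A) * c := by
          rw [← Finset.sum_add_distrib, ← Finset.sum_mul]
      _ = 2 * c := by rw [h𝒜1 D₁ hD₁, h𝒜1 D₀ hD₀]; ring
  -- the pair set
  set P₁ := P.filter (fun D => x ∈ D) with hP₁
  set P₀ := P.filter (fun D => x ∉ D) with hP₀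
  set r : Finset (Finset α × Finset α) :=
    (P₁ ×ˢ P₀).filter (fun p => (p.1 ∩ p.2).card = k - 1) with hr
  have hmem_row : ∀ p : Finset α × Finset α, p ∈ r ↔
      p.1 ∈ P₁ ∧ p.2 ∈ P.filter (fun D₀ => x ∉ D₀ ∧ (p.1 ∩ D₀).card = k - 1) := by
    intro p
    simp only [hr, hP₁, hP₀, Finset.mem_filter, Finset.mem_product]
    tauto
  have hmem_col : ∀ p : Finset α × Finset α, p ∈ r ↔
      p.2 ∈ P₀ ∧ p.1 ∈ P.filter (fun D₁ => x ∈ D₁ ∧ (D₁ ∩ p.2).card = k - 1) := by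
    intro p
    simp only [hr, hP₁, hP₀, Finset.mem_filter, Finset.mem_product]
    tauto
  have hrow : ∀ D₁ ∈ P₁,
      (P.filter (fun D₀ => x ∉ D₀ ∧ (D₁ ∩ D₀).card = k - 1)).card = k := by
    intro D₁ hD₁
    rw [hP₁, Finset.mem_filter] at hD₁
    exact row_card 𝒟 k hk1 hcard2 x D₁ hD₁.1 hD₁.2
  have hcol : ∀ D₀ ∈ P₀,
      (P.filter (fun D₁ => x ∈ D₁ ∧ (D₁ ∩ D₀).card = k - 1)).card = k := by
    intro D₀ hD₀
    rw [hP₀, Finset.mem_filter] at hD₀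
    exact col_card 𝒟 k hk1 hcard2 x hx D₀ hD₀.1 hD₀.2
  -- sums over r
  have hA1 : ∑ p ∈ r, f₁ p.1 = (k : ℝ) * ∑ D ∈ P₁, f₁ D := by
    rw [Finset.sum_finset_product r P₁ (fun D₁ => P.filter (fun D₀ => x ∉ D₀ ∧ (D₁ ∩ D₀).card = k - 1)) hmem_row]
    rw [Finset.mul_sum]
    refine Finset.sum_congr rfl fun D₁ hD₁ => ?_
    simp only [Finset.sum_const, hrow D₁ hD₁, nsmul_eq_mul]
  have hA0 : ∑ p ∈ r, f₀ p.2 = (k : ℝ) * ∑ D ∈ P₀, f₀ D := by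
    rw [Finset.sum_finset_product_right r P₀ (fun D₀ => P.filter (fun D₁ => x ∈ D₁ ∧ (D₁ ∩ D₀).card = k - 1)) hmem_col]
    rw [Finset.mul_sum]
    refine Finset.sum_congr rfl fun D₀ hD₀ => ?_
    simp only [Finset.sum_const, hcol D₀ hD₀, nsmul_eq_mul]
  have hcard1 : ∑ p ∈ r, (1:ℝ) = (k : ℝ) * P₁.card := by
    rw [Finset.sum_finset_product r P₁ (fun D₁ => P.filter (fun D₀ => x ∉ D₀ ∧ (D₁ ∩ D₀).card = k - 1)) hmem_row]
    rw [Finset.sum_congr rfl fun D₁ hD₁ => by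
      rw [Finset.sum_const, hrow D₁ hD₁, nsmul_eq_mul, mul_one]]
    rw [Finset.sum_const, nsmul_eq_mul, mul_comm]
  have hcard0 : ∑ p ∈ r, (1:ℝ) = (k : ℝ) * P₀.card := by
    rw [Finset.sum_finset_product_right r P₀ (fun D₀ => P.filter (fun D₁ => x ∈ D₁ ∧ (D₁ ∩ D₀).card = k - 1)) hmem_col]
    rw [Finset.sum_congr rfl fun D₀ hD₀ => by
      rw [Finset.sum_const, hcol D₀ hD₀, nsmul_eq_mul, mul_one]]
    rw [Finset.sum_const, nsmul_eq_mul, mul_comm]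
  have hkpos : (0:ℝ) < (k:ℝ) := by exact_mod_cast hk1
  have hPeq : (P₁.card : ℝ) = (P₀.card : ℝ) := by
    have := hcard0 ▸ hcard1
    exact mul_left_cancel₀ (ne_of_gt hkpos) (by linarith [hcard1, hcard0])
  -- main inequality over r
  have hmain : (k:ℝ) * (∑ D ∈ P₁, f₁ D + ∑ D ∈ P₀, f₀ D) ≤ (k:ℝ) * ((P₁.card : ℝ) * (2 * c)) := by
    have h1 : ∑ p ∈ r, (f₁ p.1 + f₀ p.2) ≤ ∑ p ∈ r, 2 * c := by
      refine Finset.sum_le_sum fun p hp => ?_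
      rw [hmem_row p] at hp
      obtain ⟨hp1, hp2⟩ := hp
      rw [Finset.mem_filter] at hp1 hp2
      exact pair_bound p.1 hp1.1 p.2 hp2.1 hp2.2.2
    have h2 : ∑ p ∈ r, (f₁ p.1 + f₀ p.2) = (k:ℝ) * (∑ D ∈ P₁, f₁ D + ∑ D ∈ P₀, f₀ D) := by
      rw [Finset.sum_add_distrib, hA1, hA0]; ring
    have h3 : ∑ p ∈ r, (2*c : ℝ) = (k:ℝ) * ((P₁.card : ℝ) * (2 * c)) := by
      rw [Finset.sum_const, nsmul_eq_mul]
      have : (r.card : ℝ) = ∑ p ∈ r, (1:ℝ) := by rw [Finset.sum_const, nsmul_eq_mul, mul_one]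
      rw [this, hcard1]; ring
    rw [← h2, ← h3]; exact h1
  have hS : ∑ D ∈ P₁, f₁ D + ∑ D ∈ P₀, f₀ D ≤ (P₁.card : ℝ) * (2 * c) :=
    le_of_mul_le_mul_left hmain hkpos
  -- split the target sum
  have hsplit : ∑ D ∈ P, ∑ A, 𝒜 D A * (if x ∈ D then ℐ A else 1 - ℐ A)
      = ∑ D ∈ P₁, f₁ D + ∑ D ∈ P₀, f₀ D := by
    rw [hP₁, hP₀, ← Finset.sum_filter_add_sum_filter_not P (fun D => x ∈ D)]
    congr 1
    · refine Finset.sum_congr rfl fun D hD => ?_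
      rw [Finset.mem_filter] at hD
      exact Finset.sum_congr rfl fun A _ => by rw [if_pos hD.2]
    · refine Finset.sum_congr rfl fun D hD => ?_
      rw [Finset.mem_filter] at hD
      exact Finset.sum_congr rfl fun A _ => by rw [if_neg hD.2]
  have hPcard : (P.card : ℝ) = (P₁.card : ℝ) + (P₀.card : ℝ) := by
    rw [hP₁, hP₀]
    exact_mod_cast (Finset.card_filter_add_card_filter_not (s := P)
      (p := fun D => x ∈ D)).symm
  have hPpos : (0:ℝ) < (P.card : ℝ) := by
    have : P.Nonempty := by
      obtain ⟨t, hts, htc⟩ := Finset.exists_subset_card_eq (show k ≤ 𝒟.card by omega)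
      exact ⟨t, Finset.mem_powersetCard.mpr ⟨hts, htc⟩⟩
    exact_mod_cast Finset.card_pos.mpr this
  rw [hsplit]
  rw [inv_mul_le_iff₀ hPpos, one_div]
  calc ∑ D ∈ P₁, f₁ D + ∑ D ∈ P₀, f₀ D ≤ (P₁.card : ℝ) * (2 * c) := hS
    _ = ((P₁.card : ℝ) + (P₀.card : ℝ)) * c := by rw [hPeq]; ring
    _ = (P.card : ℝ) * (1 + Real.exp (-ε))⁻¹ := by rw [hPcard, hc]
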